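/- Consider a continuous convex smooth game that is variationally stable, in which every player i runs OptDA with a regularizer h_i on X_i and the adaptive learning rate; by the finiteness of Σ_t ‖g_t^i − g_{t−1}^i‖², let η_i = lim_{t→∞} η_t^i ∈ ℝ. For each player i and t ≥ 1, let F_t^i(p) = h_i(p) − h_i(X_t^i) + (1/η_t^i)·⟨Σ_{s=1}^{t−1} g_s^i, p − X_t^i⟩ denote player i's Fenchel coupling at round t. Then for every Nash equilibrium x* of the game, the sequence Σ_{i=1}^{N} η_i · F_t^i(x*_i) converges to a finite limit as t → ∞. -/

import Mathlib

open scoped RealInnerProductSpace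
open Filter Finset Topology

noncomputable section

/-- Bregman divergence of a regularizer `h` with gradient map `Gh`. -/
def breg {F : Type*} [NormedAddCommGroup F] [InnerProductSpace ℝ F]
    (h : F → ℝ) (Gh : F → F) (p x : F) : ℝ :=
  h p - h x - ⟪Gh x, p - x⟫

/-- `h` is a regularizer on `X`: a convex differentiable function with gradient map `Gh`
that is `1`-strongly convex on `X`. -/
structure IsRegularizer {F : Type*} [NormedAddCommGroup F] [InnerProductSpace ℝ F]
    (X : Set F) (h : F → ℝ) (Gh : F → F) : Prop where
  convex : ConvexOn ℝ Set.univ h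
  grad : ∀ x : F, HasFDerivAt h (innerSL ℝ (Gh x)) x
  strong : StrongConvexOn X 1 h

/-- The adaptive learning rate `η_t = √(1 + ∑_{s=1}^{t-1} ‖g_s - g_{s-1}‖²)`. -/
def adaEta {F : Type*} [NormedAddCommGroup F] [InnerProductSpace ℝ F]
    (g : ℕ → F) (t : ℕ) : ℝ :=
  Real.sqrt (1 + ∑ s ∈ Finset.Ico 1 t, ‖g s - g (s - 1)‖ ^ 2)

/-- OptDA iterates: `Z t` is the base state `X_t` and `W t` is the played action `X_{t+1/2}`,
for feedback `g` (with `g 0 = 0`) and positive nondecreasing learning rates `η`. -/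
structure IsOptDA {F : Type*} [NormedAddCommGroup F] [InnerProductSpace ℝ F]
    (X : Set F) (h : F → ℝ) (Gh : F → F)
    (η : ℕ → ℝ) (g : ℕ → F) (Z W : ℕ → F) : Prop where
  g_zero : g 0 = 0
  eta_pos : ∀ t : ℕ, 1 ≤ t → 0 < η t
  eta_mono : ∀ t : ℕ, 1 ≤ t → η t ≤ η (t + 1)
  base_mem : ∀ t : ℕ, 1 ≤ t → Z t ∈ X
  lead_mem : ∀ t : ℕ, 1 ≤ t → W t ∈ X
  base_min : ∀ t : ℕ, 1 ≤ t → ∀ p ∈ X,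
    ⟪∑ s ∈ Finset.Ico 1 t, g s, Z t⟫ + η t * h (Z t)
      ≤ ⟪∑ s ∈ Finset.Ico 1 t, g s, p⟫ + η t * h p
  lead_min : ∀ t : ℕ, 1 ≤ t → ∀ p ∈ X,
    ⟪g (t - 1), W t⟫ + η t * breg h Gh (W t) (Z t)
      ≤ ⟪g (t - 1), p⟫ + η t * breg h Gh p (Z t)

section AuxLemmas

open Set in
lemma deriv_le_of_slope (q : ℝ → ℝ) {d c : ℝ} (hq : HasDerivAt q d 0)
    (H : ∀ s : ℝ, 0 < s → s ≤ 1 → q s - q 0 ≤ s * c) : d ≤ c := by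
  have h1 : Tendsto (slope q 0) (𝓝[>] 0) (𝓝 d) :=
    (hasDerivAt_iff_tendsto_slope.1 hq).mono_left
      (nhdsWithin_mono _ (fun x hx => ne_of_gt hx))
  refine le_of_tendsto h1 ?_
  filter_upwards [Ioc_mem_nhdsGT (zero_lt_one (α := ℝ))] with s hs
  have hs0 : (0:ℝ) < s := hs.1
  have : slope q 0 s = (q s - q 0) / s := by
    simp [slope_def_field]
  rw [this, div_le_iff₀ hs0]
  linarith [H s hs0 hs.2]

lemma deriv_ge_of_slope (q : ℝ → ℝ) {d c : ℝ} (hq : HasDerivAt q d 0)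
    (H : ∀ s : ℝ, 0 < s → s ≤ 1 → s * c ≤ q s - q 0) : c ≤ d := by
  have := deriv_le_of_slope (fun s => -q s) (d := -d) (c := -c) hq.neg ?_
  · linarith
  · intro s hs0 hs1
    have := H s hs0 hs1
    nlinarith

variable {F : Type*} [NormedAddCommGroup F] [InnerProductSpace ℝ F]

lemma segment_eq (z d : F) (s : ℝ) : z + s • d = (1 - s) • z + s • (z + d) := by
  simp [sub_smul, smul_add]; abel

lemma grad_ineq {h : F → ℝ} {Gh : F → F} (hconv : ConvexOn ℝ Set.univ h)
    (hgrad : ∀ x, HasFDerivAt h (innerSL ℝ (Gh x)) x) (x y : F) :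
    h x + ⟪Gh x, y - x⟫ ≤ h y := by
  set d := y - x with hd
  have hc : HasDerivAt (fun s : ℝ => x + s • d) d 0 := by
    simpa using ((hasDerivAt_id (0:ℝ)).smul_const d).const_add x
  have hq : HasDerivAt (fun s : ℝ => h (x + s • d)) ⟪Gh x, d⟫ 0 := by
    have h0 : HasFDerivAt h (innerSL ℝ (Gh x)) (x + (0:ℝ) • d) := by
      simpa using hgrad x
    have h1 : HasDerivAt (fun s : ℝ => h (x + s • d)) (innerSL ℝ (Gh x) d) 0 :=
      h0.comp_hasDerivAt 0 hc
    simpa using h1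
  have := deriv_le_of_slope _ hq (c := h y - h x) ?_
  · linarith [this]
  · intro s hs0 hs1
    have hseg : x + s • d = (1 - s) • x + s • y := by
      rw [segment_eq x d s]; congr 1; rw [hd]; congr 1; abel
    have := hconv.2 (Set.mem_univ x) (Set.mem_univ y) (by linarith : (0:ℝ) ≤ 1 - s)
      (le_of_lt hs0) (by ring)
    simp only [smul_eq_mul] at this
    simp only [zero_smul, add_zero, hseg]
    nlinarith

lemma min_vi {X : Set F} (hXc : Convex ℝ X) {h : F → ℝ} {Gh : F → F}
    (hgrad : ∀ x, HasFDerivAt h (innerSL ℝ (Gh x)) x) (v : F) (η : ℝ) {z : F} (hz : z ∈ X)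
    (hmin : ∀ x ∈ X, ⟪v, z⟫ + η * h z ≤ ⟪v, x⟫ + η * h x) {x : F} (hx : x ∈ X) :
    0 ≤ ⟪v, x - z⟫ + η * ⟪Gh z, x - z⟫ := by
  set d := x - z with hd
  have hc : HasDerivAt (fun s : ℝ => z + s • d) d 0 := by
    simpa using ((hasDerivAt_id (0:ℝ)).smul_const d).const_add z
  have hf : HasFDerivAt (fun w => ⟪v, w⟫ + η * h w) (innerSL ℝ v + η • innerSL ℝ (Gh z)) z :=
    ((innerSL ℝ v).hasFDerivAt).add ((hgrad z).const_mul η)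
  have hq : HasDerivAt (fun s : ℝ => ⟪v, z + s • d⟫ + η * h (z + s • d))
      (⟪v, d⟫ + η * ⟪Gh z, d⟫) 0 := by
    have h0 : HasFDerivAt (fun w => ⟪v, w⟫ + η * h w) (innerSL ℝ v + η • innerSL ℝ (Gh z))
        (z + (0:ℝ) • d) := by simpa using hf
    have : HasDerivAt (fun s : ℝ => ⟪v, z + s • d⟫ + η * h (z + s • d))
        ((innerSL ℝ v + η • innerSL ℝ (Gh z)) d) 0 := by
      have h2 := h0.comp_hasDerivAt 0 hc
      exact h2
    simpa [smul_eq_mul] using this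
  refine deriv_ge_of_slope _ hq (c := 0) ?_
  intro s hs0 hs1
  have hmem : z + s • d ∈ X := by
    rw [segment_eq z d s]
    have : z + d = x := by rw [hd]; abel
    rw [this]
    exact hXc hz hx (by linarith) (le_of_lt hs0) (by ring)
  have h5 := hmin _ hmem
  simp only [zero_smul, add_zero, zero_mul]
  linarith [h5]

lemma strong_growth {X : Set F} (hXc : Convex ℝ X) {h : F → ℝ}
    (hsc : StrongConvexOn X 1 h) {η : ℝ} (hη : 0 ≤ η) (v : F) {z : F} (hz : z ∈ X)
    (hmin : ∀ x ∈ X, ⟪v, z⟫ + η * h z ≤ ⟪v, x⟫ + η * h x) {x : F} (hx : x ∈ X) :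
    ⟪v, z⟫ + η * h z + η / 4 * ‖x - z‖ ^ 2 ≤ ⟪v, x⟫ + η * h x := by
  obtain ⟨-, hsc2⟩ := hsc
  have hm := hsc2 hx hz (a := (1:ℝ)/2) (b := (1:ℝ)/2) (by norm_num) (by norm_num) (by norm_num)
  have hmem : (1/2 : ℝ) • x + (1/2 : ℝ) • z ∈ X :=
    hXc hx hz (by norm_num) (by norm_num) (by norm_num)
  have h2 := hmin _ hmem
  rw [inner_add_right, real_inner_smul_right, real_inner_smul_right] at h2
  simp only [smul_eq_mul] at hm
  nlinarith [mul_le_mul_of_nonneg_left hm hη]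

lemma breg_lb {X : Set F} {h : F → ℝ} {Gh : F → F} (hconv : ConvexOn ℝ Set.univ h)
    (hgrad : ∀ x, HasFDerivAt h (innerSL ℝ (Gh x)) x)
    (hsc : StrongConvexOn X 1 h) {p x : F} (hp : p ∈ X) (hx : x ∈ X) :
    h p - h x ≤ ‖Gh p‖ ^ 2 := by
  obtain ⟨-, hsc2⟩ := hsc
  have hm := hsc2 hp hx (a := (1:ℝ)/2) (b := (1:ℝ)/2) (by norm_num) (by norm_num) (by norm_num)
  simp only [smul_eq_mul] at hm
  have hg := grad_ineq hconv hgrad p ((1/2 : ℝ) • p + (1/2 : ℝ) • x)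
  have hmp : ((1/2 : ℝ) • p + (1/2 : ℝ) • x) - p = (1/2 : ℝ) • (x - p) := by module
  rw [hmp, real_inner_smul_right] at hg
  have hcs : ⟪Gh p, p - x⟫ ≤ ‖Gh p‖ * ‖p - x‖ := real_inner_le_norm _ _
  have hinner : ⟪Gh p, x - p⟫ = - ⟪Gh p, p - x⟫ := by
    rw [← inner_neg_right]; congr 1; abel
  have hnrm : ‖x - p‖ = ‖p - x‖ := norm_sub_rev _ _
  rw [hinner] at hg
  nlinarith [sq_nonneg (‖Gh p‖ - ‖p - x‖ / 2), norm_nonneg (p - x)]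

lemma optda_step {X : Set F} (hXc : Convex ℝ X) {h : F → ℝ} {Gh : F → F} {η : ℕ → ℝ}
    {g : ℕ → F} {Z W : ℕ → F} (reg : IsRegularizer X h Gh) (run : IsOptDA X h Gh η g Z W)
    {p : F} (hp : p ∈ X) {t : ℕ} (ht : 1 ≤ t) :
    ⟪∑ s ∈ Finset.Ico 1 (t+1), g s, p - Z (t+1)⟫ + η (t+1) * (h p - h (Z (t+1)))
      ≤ (⟪∑ s ∈ Finset.Ico 1 t, g s, p - Z t⟫ + η t * (h p - h (Z t)))
        + ⟪g t, p - W t⟫ + (η (t+1) - η t) * (h p - h (Z (t+1)))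
        + ‖g t - g (t-1)‖ ^ 2 / η t := by
  have hlam : ∑ s ∈ Finset.Ico 1 (t+1), g s = (∑ s ∈ Finset.Ico 1 t, g s) + g t :=
    Finset.sum_Ico_succ_top ht g
  set lam := ∑ s ∈ Finset.Ico 1 t, g s with hlamdef
  have hηt : 0 < η t := run.eta_pos t ht
  have hZt : Z t ∈ X := run.base_mem t ht
  have hZ' : Z (t+1) ∈ X := run.base_mem (t+1) (by omega)
  have hWt : W t ∈ X := run.lead_mem t ht
  -- prox step in linear-plus-h form
  set v := g (t-1) - η t • Gh (Z t) with hv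
  have hproxmin : ∀ x ∈ X, ⟪v, W t⟫ + η t * h (W t) ≤ ⟪v, x⟫ + η t * h x := by
    intro x hx
    have h1 := run.lead_min t ht x hx
    simp only [breg, inner_sub_right, hv, inner_sub_left, real_inner_smul_left] at h1 ⊢
    nlinarith [h1]
  have hprox := strong_growth hXc reg.strong hηt.le v hWt hproxmin hZ'
  -- bregman nonnegativity
  have hD : 0 ≤ h (W t) - h (Z t) - (⟪Gh (Z t), W t⟫ - ⟪Gh (Z t), Z t⟫) := by
    have := grad_ineq reg.convex reg.grad (Z t) (W t)
    simp only [inner_sub_right] at this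
    linarith
  have hD2 : 0 ≤ η t * (h (W t) - h (Z t) - (⟪Gh (Z t), W t⟫ - ⟪Gh (Z t), Z t⟫)) :=
    mul_nonneg hηt.le hD
  -- variational inequality at Z t
  have hvi := min_vi hXc reg.grad lam (η t) hZt (fun x hx => run.base_min t ht x hx) hZ'
  -- AM-GM
  have hamgm : ⟪g t - g (t-1), W t - Z (t+1)⟫
      ≤ ‖g t - g (t-1)‖ ^ 2 / η t + η t / 4 * ‖W t - Z (t+1)‖ ^ 2 := by
    have h1 := real_inner_le_norm (g t - g (t-1)) (W t - Z (t+1))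
    have h2 : ⟪g t - g (t-1), W t - Z (t+1)⟫
        ≤ (‖g t - g (t-1)‖ ^ 2 + η t ^ 2 * ‖W t - Z (t+1)‖ ^ 2 / 4) / η t := by
      rw [le_div_iff₀ hηt]
      nlinarith [sq_nonneg (‖g t - g (t-1)‖ - η t * ‖W t - Z (t+1)‖ / 2),
        mul_le_mul_of_nonneg_left h1 hηt.le]
    have h3 : (‖g t - g (t-1)‖ ^ 2 + η t ^ 2 * ‖W t - Z (t+1)‖ ^ 2 / 4) / η t
        = ‖g t - g (t-1)‖ ^ 2 / η t + η t / 4 * ‖W t - Z (t+1)‖ ^ 2 := by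
      field_simp
    linarith [h2, h3.le]
  -- expand everything and conclude
  have hnrm : ‖Z (t+1) - W t‖ = ‖W t - Z (t+1)‖ := norm_sub_rev _ _
  rw [hlam]
  simp only [hv, inner_sub_left, real_inner_smul_left, inner_sub_right, inner_add_left]
  simp only [hv, inner_sub_left, real_inner_smul_left, inner_sub_right, inner_add_left] at hprox hvi hamgm
  rw [hnrm] at hprox
  nlinarith [hprox, hvi, hamgm, hD2]

lemma optda_phi_nonneg {X : Set F} {h : F → ℝ} {Gh : F → F} {η : ℕ → ℝ}
    {g : ℕ → F} {Z W : ℕ → F} (run : IsOptDA X h Gh η g Z W)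
    {p : F} (hp : p ∈ X) {t : ℕ} (ht : 1 ≤ t) :
    0 ≤ ⟪∑ s ∈ Finset.Ico 1 t, g s, p - Z t⟫ + η t * (h p - h (Z t)) := by
  have := run.base_min t ht p hp
  simp only [inner_sub_right]
  nlinarith [this]

end AuxLemmas

variable {ι : Type*} [Fintype ι] [DecidableEq ι] {E : ι → Type*}
  [∀ i, NormedAddCommGroup (E i)] [∀ i, InnerProductSpace ℝ (E i)]
  [∀ i, FiniteDimensional ℝ (E i)]

/-- The profile of actions played at round `t`, as a point of the joint space `PiLp 2 E`
(whose norm is the product norm `‖x‖ = √(∑ j ‖x j‖²)`). -/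
def profileAt (W : ∀ i, ℕ → E i) (t : ℕ) : PiLp 2 E := WithLp.toLp 2 (fun j => W j t)

/-- A continuous convex smooth game: each player `i` has a nonempty closed convex action set
`X i`, a continuous loss `L i` convex in the `i`-th variable, and a Lipschitz continuous map
`V i` selecting subgradients of `L i` in the `i`-th variable on the joint action space. -/
structure ConvexGame (X : ∀ i, Set (E i)) (L : ι → PiLp 2 E → ℝ)
    (V : ∀ i, PiLp 2 E → E i) : Prop where
  nonempty : ∀ i, (X i).Nonempty
  closed : ∀ i, IsClosed (X i)
  convexSet : ∀ i, Convex ℝ (X i)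
  contLoss : ∀ i, Continuous (L i)
  convexLoss : ∀ i, ∀ x : PiLp 2 E,
    ConvexOn ℝ Set.univ fun p : E i => L i (WithLp.toLp 2 (Function.update x i p))
  lipschitzV : ∀ i, ∃ K : NNReal, LipschitzWith K (V i)
  subgrad : ∀ i, ∀ x : PiLp 2 E, (∀ j, x j ∈ X j) → ∀ p ∈ X i,
    L i x + ⟪V i x, p - x i⟫ ≤ L i (WithLp.toLp 2 (Function.update x i p))

/-- `x` is a Nash equilibrium of the game. -/
def IsNashEq (X : ∀ i, Set (E i)) (L : ι → PiLp 2 E → ℝ) (x : PiLp 2 E) : Prop :=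
  (∀ i, x i ∈ X i) ∧ ∀ i, ∀ p ∈ X i, L i x ≤ L i (WithLp.toLp 2 (Function.update x i p))

/-- The game is variationally stable. -/
def VarStable (X : ∀ i, Set (E i)) (L : ι → PiLp 2 E → ℝ)
    (V : ∀ i, PiLp 2 E → E i) : Prop :=
  (∃ xs : PiLp 2 E, IsNashEq X L xs) ∧
    ∀ x : PiLp 2 E, (∀ j, x j ∈ X j) → ∀ xs : PiLp 2 E, IsNashEq X L xs →
      0 ≤ ∑ i, ⟪V i x, x i - xs i⟫

/-- Every player `i` runs OptDA with regularizer `h i` and the adaptive learning rate,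
the feedback being the individual gradient `V i` evaluated at the realized profile. -/
structure AllOptDA (X : ∀ i, Set (E i)) (V : ∀ i, PiLp 2 E → E i)
    (h : ∀ i, E i → ℝ) (Gh : ∀ i, E i → E i)
    (η : ∀ i, ℕ → ℝ) (g : ∀ i, ℕ → E i) (Z W : ∀ i, ℕ → E i) : Prop where
  reg : ∀ i, IsRegularizer (X i) (h i) (Gh i)
  g_zero : ∀ i, g i 0 = 0
  feedback : ∀ i, ∀ t : ℕ, 1 ≤ t → g i t = V i (profileAt W t)
  rate : ∀ i t, η i t = adaEta (g i) t
  run : ∀ i, IsOptDA (X i) (h i) (Gh i) (η i) (g i) (Z i) (W i)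

/-- Lemma 6: in a variationally stable game where all players run OptDA with the adaptive
learning rate, the aggregate (limit-rate weighted) Fenchel coupling to any Nash
equilibrium converges. -/
theorem weighted_fenchel_coupling_converges
    (X : ∀ i, Set (E i)) (L : ι → PiLp 2 E → ℝ) (V : ∀ i, PiLp 2 E → E i)
    (game : ConvexGame X L V) (hvs : VarStable X L V)
    (h : ∀ i, E i → ℝ) (Gh : ∀ i, E i → E i)
    (η : ∀ i, ℕ → ℝ) (g : ∀ i, ℕ → E i) (Z W : ∀ i, ℕ → E i)
    (setup : AllOptDA X V h Gh η g Z W)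
    (ηlim : ι → ℝ) (hηlim : ∀ i, Tendsto (fun t : ℕ => η i t) atTop (𝓝 (ηlim i))) :
    ∀ xs : PiLp 2 E, IsNashEq X L xs →
      ∃ c : ℝ, Tendsto (fun t : ℕ => ∑ i, ηlim i *
        (h i (xs i) - h i (Z i t) +
          (1 / η i t) * ⟪∑ s ∈ Finset.Ico 1 t, g i s, xs i - Z i t⟫)) atTop (𝓝 c) := by
  intro xs hnash
  have hxsmem : ∀ i, xs i ∈ X i := hnash.1
  set Φ : ι → ℕ → ℝ := fun i t =>
    ⟪∑ s ∈ Finset.Ico 1 t, g i s, xs i - Z i t⟫ + η i t * (h i (xs i) - h i (Z i t)) with hΦ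
  set C : ι → ℝ := fun i => ‖Gh i (xs i)‖ ^ 2 with hC
  set S : ℕ → ℝ := fun t => ∑ i, Φ i t with hS
  set P : ℕ → ℝ := fun t => ∑ i, (C i * η i t + (η i t) ^ 2) with hP
  -- learning rate basics
  have hη1 : ∀ i t, (1 : ℝ) ≤ η i t := by
    intro i t
    rw [setup.rate i t]
    unfold adaEta
    have h0 : 0 ≤ ∑ s ∈ Finset.Ico 1 t, ‖g i s - g i (s-1)‖ ^ 2 :=
      Finset.sum_nonneg fun s _ => sq_nonneg _
    calc (1:ℝ) = Real.sqrt 1 := Real.sqrt_one.symm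
      _ ≤ _ := Real.sqrt_le_sqrt (by linarith)
  have hηpos : ∀ i t, (0:ℝ) < η i t := fun i t => lt_of_lt_of_le one_pos (hη1 i t)
  have hmono : ∀ i, Monotone (fun t => η i t) := by
    intro i t u htu
    simp only [setup.rate i]
    unfold adaEta
    apply Real.sqrt_le_sqrt
    have hsub : Finset.Ico 1 t ⊆ Finset.Ico 1 u := Finset.Ico_subset_Ico le_rfl htu
    have := Finset.sum_le_sum_of_subset_of_nonneg hsub
      (fun s _ _ => sq_nonneg (‖g i s - g i (s-1)‖))
    linarith
  have hηle : ∀ i t, η i t ≤ ηlim i := fun i t => (hmono i).ge_of_tendsto (hηlim i) t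
  have hηlim1 : ∀ i, (1:ℝ) ≤ ηlim i := fun i => le_trans (hη1 i 0) (hηle i 0)
  have hsq : ∀ i t, 1 ≤ t → η i (t+1) ^ 2 - η i t ^ 2 = ‖g i t - g i (t-1)‖ ^ 2 := by
    intro i t ht
    have hnn : ∀ u : ℕ, (0:ℝ) ≤ 1 + ∑ s ∈ Finset.Ico 1 u, ‖g i s - g i (s-1)‖ ^ 2 := by
      intro u
      have : 0 ≤ ∑ s ∈ Finset.Ico 1 u, ‖g i s - g i (s-1)‖ ^ 2 :=
        Finset.sum_nonneg fun s _ => sq_nonneg _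
      linarith
    rw [setup.rate i t, setup.rate i (t+1)]
    unfold adaEta
    rw [Real.sq_sqrt (hnn (t+1)), Real.sq_sqrt (hnn t),
      Finset.sum_Ico_succ_top ht (fun s => ‖g i s - g i (s-1)‖ ^ 2)]
    ring
  -- aggregate step inequality
  have hstep : ∀ t, 1 ≤ t → S (t+1) ≤ S t + (P (t+1) - P t) := by
    intro t ht
    have h1 : ∀ i, Φ i (t+1) ≤ Φ i t + ⟪g i t, xs i - W i t⟫ +
        ((C i * η i (t+1) + η i (t+1) ^ 2) - (C i * η i t + η i t ^ 2)) := by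
      intro i
      have hst := optda_step (game.convexSet i) (setup.reg i) (setup.run i) (hxsmem i) ht
      have hb := breg_lb (setup.reg i).convex (setup.reg i).grad (setup.reg i).strong
        (hxsmem i) ((setup.run i).base_mem (t+1) (by omega))
      have hδ : η i t ≤ η i (t+1) := (setup.run i).eta_mono t ht
      have hdiv : ‖g i t - g i (t-1)‖ ^ 2 / η i t ≤ ‖g i t - g i (t-1)‖ ^ 2 :=
        div_le_self (sq_nonneg _) (hη1 i t)
      have hsq' := hsq i t ht
      have hmul := mul_le_mul_of_nonneg_left hb (sub_nonneg.2 hδ)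
      simp only [hΦ, hC]
      linarith [hst]
    have h2 : S (t+1) ≤ ∑ i, (Φ i t + ⟪g i t, xs i - W i t⟫ +
        ((C i * η i (t+1) + η i (t+1) ^ 2) - (C i * η i t + η i t ^ 2))) :=
      Finset.sum_le_sum fun i _ => h1 i
    have h3 : ∑ i, (Φ i t + ⟪g i t, xs i - W i t⟫ +
        ((C i * η i (t+1) + η i (t+1) ^ 2) - (C i * η i t + η i t ^ 2)))
        = S t + (∑ i, ⟪g i t, xs i - W i t⟫) + (P (t+1) - P t) := by
      simp only [hS, hP, Finset.sum_add_distrib, Finset.sum_sub_distrib]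
      try ring
    have hx : ∀ j, profileAt W t j ∈ X j := fun j => by simpa [profileAt] using (setup.run j).lead_mem t ht
    have h4 := hvs.2 (profileAt W t) hx xs hnash
    have h5 : ∑ i, ⟪g i t, xs i - W i t⟫
        = - ∑ i, ⟪V i (profileAt W t), profileAt W t i - xs i⟫ := by
      rw [← Finset.sum_neg_distrib]
      apply Finset.sum_congr rfl
      intro i _
      rw [setup.feedback i t ht, show profileAt W t i = W i t from by simp [profileAt], ← inner_neg_right]
      congr 1
      abel
    rw [h3] at h2
    rw [h5] at h2
    linarith
  -- convergence of S
  have hSnn : ∀ t, 1 ≤ t → 0 ≤ S t := by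
    intro t ht
    exact Finset.sum_nonneg fun i _ => optda_phi_nonneg (setup.run i) (hxsmem i) ht
  set PL : ℝ := ∑ i, (C i * ηlim i + ηlim i ^ 2) with hPL
  have hPle : ∀ t, P t ≤ PL := by
    intro t
    apply Finset.sum_le_sum
    intro i _
    have h1 : C i * η i t ≤ C i * ηlim i :=
      mul_le_mul_of_nonneg_left (hηle i t) (sq_nonneg _)
    have h2 : η i t ^ 2 ≤ ηlim i ^ 2 := by
      have := hη1 i t
      nlinarith [hηle i t]
    linarith
  set Gs : ℕ → ℝ := fun n => S (n+1) - P (n+1) with hGs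
  have hanti : Antitone Gs := by
    apply antitone_nat_of_succ_le
    intro n
    have := hstep (n+1) (by omega)
    simp only [hGs]
    linarith
  have hbdd : BddBelow (Set.range Gs) := by
    refine ⟨-PL, ?_⟩
    rintro x ⟨n, rfl⟩
    have := hSnn (n+1) (by omega)
    have := hPle (n+1)
    simp only [hGs]
    linarith
  have hG : Tendsto Gs atTop (𝓝 (⨅ n, Gs n)) := tendsto_atTop_ciInf hanti hbdd
  set Lc : ℝ := ⨅ n, Gs n with hLc
  have hPt : Tendsto P atTop (𝓝 PL) := by
    apply tendsto_finset_sum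
    intro i _
    exact ((hηlim i).const_mul (C i)).add ((hηlim i).pow 2)
  have hSt : Tendsto S atTop (𝓝 (Lc + PL)) := by
    rw [← tendsto_add_atTop_iff_nat 1]
    have h6 := hG.add (hPt.comp (tendsto_add_atTop_nat 1))
    refine h6.congr fun n => ?_
    simp only [hGs, Function.comp]
    ring
  -- final comparison
  have hDt : Tendsto (fun t => ∑ i, ((ηlim i / η i t - 1) * Φ i t)) atTop (𝓝 0) := by
    rw [show (0:ℝ) = ∑ i : ι, (0:ℝ) from by simp]
    apply tendsto_finset_sum
    intro i _
    apply squeeze_zero' (t₀ := atTop) (g := fun t => (ηlim i - η i t) * S t)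
    · filter_upwards [eventually_ge_atTop 1] with t ht
      apply mul_nonneg
      · have := (one_le_div (hηpos i t)).2 (hηle i t)
        linarith
      · exact optda_phi_nonneg (setup.run i) (hxsmem i) ht
    · filter_upwards [eventually_ge_atTop 1] with t ht
      have hcoef : ηlim i / η i t - 1 ≤ ηlim i - η i t := by
        rw [div_sub_one (ne_of_gt (hηpos i t))]
        exact div_le_self (sub_nonneg.2 (hηle i t)) (hη1 i t)
      have hΦS : Φ i t ≤ S t := by
        apply Finset.single_le_sum (f := fun j => Φ j t)
          (fun j _ => optda_phi_nonneg (setup.run j) (hxsmem j) ht) (Finset.mem_univ i)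
      have hΦnn : 0 ≤ Φ i t := optda_phi_nonneg (setup.run i) (hxsmem i) ht
      have hcoefnn : 0 ≤ ηlim i / η i t - 1 := by
        have := (one_le_div (hηpos i t)).2 (hηle i t)
        linarith
      calc (ηlim i / η i t - 1) * Φ i t ≤ (ηlim i - η i t) * Φ i t :=
            mul_le_mul_of_nonneg_right hcoef hΦnn
        _ ≤ (ηlim i - η i t) * S t := by
            apply mul_le_mul_of_nonneg_left hΦS
            linarith [hηle i t]
    · simpa using ((hηlim i).const_sub (ηlim i)).mul hSt
  refine ⟨Lc + PL, ?_⟩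
  have hsum := hSt.add hDt
  rw [add_zero] at hsum
  apply Tendsto.congr' _ hsum
  filter_upwards [eventually_ge_atTop 1] with t ht
  rw [hS, ← Finset.sum_add_distrib]
  apply Finset.sum_congr rfl
  intro i _
  have hne : η i t ≠ 0 := ne_of_gt (hηpos i t)
  simp only [hΦ]
  field_simp
  ring
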